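/- A pure quaternion q belongs to the quaternionic Mandelbrot set if and only if ‖q‖·i belongs to the classical Mandelbrot set. Consequently, setting R = max{x ≥ 0 : xi ∈ M} (which exists since M is closed), the 3D slice H(i,j,k) of the quaternionic Mandelbrot set is contained in the closed ball of radius R centered at 0. -/

import Mathlib

open scoped Quaternion

lemma pure_unit_mul_self {u : ℍ[ℝ]} (hre : u.re = 0) (hu : ‖u‖ = 1) :
    u * u = -1 := by
  have hns : Quaternion.normSq u = 1 := by
    rw [Quaternion.normSq_eq_norm_mul_self, hu]; ring
  rw [Quaternion.normSq_def'] at hns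
  ext <;>
    simp [Quaternion.re_mul, Quaternion.imI_mul, Quaternion.imJ_mul,
      Quaternion.imK_mul, hre] <;> nlinarith [hns]

lemma lift_norm {u : ℍ[ℝ]} (hre : u.re = 0) (hu : ‖u‖ = 1)
    (h2 : u * u = -1) (z : ℂ) :
    ‖Complex.liftAux u h2 z‖ = ‖z‖ := by
  have hns : Quaternion.normSq u = 1 := by
    rw [Quaternion.normSq_eq_norm_mul_self, hu]; ring
  rw [Quaternion.normSq_def'] at hns
  rw [Complex.liftAux_apply]
  rw [← mul_self_inj (norm_nonneg _) (norm_nonneg _),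
    ← Quaternion.normSq_eq_norm_mul_self, ← pow_two, ← Complex.normSq_eq_norm_sq,
    Complex.normSq_apply, Quaternion.normSq_def']
  simp [Quaternion.re_add, Quaternion.imI_add, Quaternion.imJ_add,
    Quaternion.imK_add, Quaternion.re_smul, Quaternion.imI_smul,
    Quaternion.imJ_smul, Quaternion.imK_smul, hre]
  have h3 : u.imI^2 + u.imJ^2 + u.imK^2 = 1 := by rw [hre] at hns; linarith
  linear_combination z.im^2 * h3

lemma quat_iter_eq {q : ℍ[ℝ]} (hq : q.re = 0) (hq0 : q ≠ 0)
    {u : ℍ[ℝ]} (hu : u = ‖q‖⁻¹ • q) (h2 : u * u = -1) (n : ℕ) :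
    (fun z : ℍ[ℝ] => z ^ 2 + q)^[n] 0 =
      Complex.liftAux u h2
        ((fun z : ℂ => z ^ 2 + (‖q‖ : ℂ) * Complex.I)^[n] 0) := by
  induction n with
  | zero => simp
  | succ n ih =>
    rw [Function.iterate_succ_apply', Function.iterate_succ_apply', ih]
    have hqval : Complex.liftAux u h2 ((‖q‖ : ℂ) * Complex.I) = q := by
      rw [map_mul, Complex.liftAux_apply_I]
      have : Complex.liftAux u h2 ((‖q‖ : ℝ) : ℂ) = algebraMap ℝ ℍ[ℝ] ‖q‖ := by
        simp [Complex.liftAux_apply]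
      rw [this, hu, Algebra.algebraMap_eq_smul_one, smul_mul_assoc, one_mul,
        smul_smul, mul_inv_cancel₀ (norm_ne_zero_iff.mpr hq0), one_smul]
    simp only [map_add, map_pow, hqval]

lemma complex_iter_zero (c : ℂ) (hc : c = 0) (n : ℕ) :
    (fun z : ℂ => z ^ 2 + c)^[n] 0 = 0 := by
  induction n with
  | zero => simp
  | succ n ih => rw [Function.iterate_succ_apply', ih]; simp [hc]

lemma quat_iter_zero (n : ℕ) :
    (fun z : ℍ[ℝ] => z ^ 2 + 0)^[n] 0 = 0 := by
  induction n with
  | zero => simp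
  | succ n ih => rw [Function.iterate_succ_apply', ih]; simp

lemma escape {x : ℝ} (hx : 2 < x) :
    ¬ Bornology.IsBounded
      (Set.range fun n : ℕ =>
        (fun z : ℂ => z ^ 2 + (x : ℂ) * Complex.I)^[n] 0) := by
  intro h
  obtain ⟨C, hC⟩ := isBounded_iff_forall_norm_le.mp h
  have hnormc : ‖(x : ℂ) * Complex.I‖ = x := by
    rw [norm_mul, Complex.norm_real, Complex.norm_I, mul_one,
      Real.norm_eq_abs, abs_of_pos (by linarith)]
  have grow : ∀ n : ℕ, x * (x - 1) ^ n ≤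
      ‖(fun z : ℂ => z ^ 2 + (x : ℂ) * Complex.I)^[n + 1] 0‖ := by
    intro n
    induction n with
    | zero => simp [hnormc, le_abs_self]
    | succ n ih =>
      rw [Function.iterate_succ_apply']
      set w := (fun z : ℂ => z ^ 2 + (x : ℂ) * Complex.I)^[n + 1] 0 with hw
      have hpow : (1 : ℝ) ≤ (x - 1) ^ n := one_le_pow₀ (by linarith)
      have h1 : ‖w ^ 2‖ ≤ ‖w ^ 2 + (x : ℂ) * Complex.I‖ + x := by
        calc ‖w ^ 2‖ = ‖(w ^ 2 + (x : ℂ) * Complex.I) - (x : ℂ) * Complex.I‖ := by ring_nf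
          _ ≤ ‖w ^ 2 + (x : ℂ) * Complex.I‖ + ‖(x : ℂ) * Complex.I‖ := norm_sub_le _ _
          _ = ‖w ^ 2 + (x : ℂ) * Complex.I‖ + x := by rw [hnormc]
      have h2 : ‖w ^ 2‖ = ‖w‖ ^ 2 := by rw [norm_pow]
      have hwx : x ≤ ‖w‖ := by nlinarith
      have h3 : (x - 1) * (x * (x - 1) ^ n) ≤ (x - 1) * ‖w‖ :=
        mul_le_mul_of_nonneg_left ih (by linarith)
      have hprod : 0 ≤ (‖w‖ - x) * (‖w‖ + 1) :=
        mul_nonneg (by linarith) (by positivity)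
      have h4 : x * (x - 1) ^ (n + 1) = (x - 1) * (x * (x - 1) ^ n) := by ring
      nlinarith [h1, h2, h3, hprod, h4]
  obtain ⟨n, hn⟩ := pow_unbounded_of_one_lt C (by linarith : (1:ℝ) < x - 1)
  have hCn := hC _ (Set.mem_range_self (n + 1))
  have hpow : (1 : ℝ) ≤ (x - 1) ^ n := one_le_pow₀ (by linarith)
  nlinarith [grow n]

theorem metasphere_in_closed_ball :
    (∀ q : ℍ[ℝ], q.re = 0 →
      (Bornology.IsBounded
          (Set.range fun n : ℕ => (fun z : ℍ[ℝ] => z ^ 2 + q)^[n] 0) ↔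
        Bornology.IsBounded
          (Set.range fun n : ℕ =>
            (fun z : ℂ => z ^ 2 + (‖q‖ : ℂ) * Complex.I)^[n] 0))) ∧
    (∀ q : ℍ[ℝ], q.re = 0 →
      Bornology.IsBounded
          (Set.range fun n : ℕ => (fun z : ℍ[ℝ] => z ^ 2 + q)^[n] 0) →
        q ∈ Metric.closedBall (0 : ℍ[ℝ])
          (sSup {x : ℝ | 0 ≤ x ∧ Bornology.IsBounded
            (Set.range fun n : ℕ =>
              (fun z : ℂ => z ^ 2 + (x : ℂ) * Complex.I)^[n] 0)})) := by
  have part1 : ∀ q : ℍ[ℝ], q.re = 0 →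
      (Bornology.IsBounded
          (Set.range fun n : ℕ => (fun z : ℍ[ℝ] => z ^ 2 + q)^[n] 0) ↔
        Bornology.IsBounded
          (Set.range fun n : ℕ =>
            (fun z : ℂ => z ^ 2 + (‖q‖ : ℂ) * Complex.I)^[n] 0)) := by
    intro q hq
    by_cases hq0 : q = 0
    · subst hq0
      constructor <;> intro _ <;>
        rw [isBounded_iff_forall_norm_le] <;> refine ⟨0, ?_⟩ <;>
        rintro _ ⟨n, rfl⟩
      · simp [complex_iter_zero ((‖(0:ℍ[ℝ])‖ : ℂ) * Complex.I) (by simp) n]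
      · simp [quat_iter_zero n]
    · set u : ℍ[ℝ] := ‖q‖⁻¹ • q with hu
      have hur : u.re = 0 := by simp [hu, Quaternion.re_smul, hq]
      have hun : ‖u‖ = 1 := by
        rw [hu, norm_smul, norm_inv, norm_norm,
          inv_mul_cancel₀ (norm_ne_zero_iff.mpr hq0)]
      have h2 : u * u = -1 := pure_unit_mul_self hur hun
      have key : ∀ n : ℕ,
          ‖(fun z : ℍ[ℝ] => z ^ 2 + q)^[n] 0‖ =
            ‖(fun z : ℂ => z ^ 2 + (‖q‖ : ℂ) * Complex.I)^[n] 0‖ := by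
        intro n
        rw [quat_iter_eq hq hq0 hu h2 n, lift_norm hur hun]
      constructor <;> intro h <;>
        obtain ⟨C, hC⟩ := isBounded_iff_forall_norm_le.mp h <;>
        rw [isBounded_iff_forall_norm_le] <;> refine ⟨C, ?_⟩ <;>
        rintro _ ⟨n, rfl⟩
      · rw [← key n]; exact hC _ (Set.mem_range_self n)
      · rw [key n]; exact hC _ (Set.mem_range_self n)
  refine ⟨part1, ?_⟩
  intro q hq hb
  set S := {x : ℝ | 0 ≤ x ∧ Bornology.IsBounded
    (Set.range fun n : ℕ =>
      (fun z : ℂ => z ^ 2 + (x : ℂ) * Complex.I)^[n] 0)} with hS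
  have hmem : ‖q‖ ∈ S := ⟨norm_nonneg q, (part1 q hq).mp hb⟩
  have hbdd : BddAbove S := by
    refine ⟨2, ?_⟩
    rintro x ⟨hx0, hxb⟩
    by_contra hx2
    exact escape (by linarith) hxb
  rw [Metric.mem_closedBall, dist_zero_right]
  exact le_csSup hbdd hmem
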